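/- Let G be a graph with vertex degrees d_1 ≤ d_2 ≤ … ≤ d_n, n ≥ 3. If G has no Hamiltonian cycle, then there exists an index i with 1 ≤ i < n/2 such that d_i ≤ i and d_{n-i} ≤ n - i - 1. -/

import Mathlib

open SimpleGraph List Finset

set_option linter.unusedSectionVars false
set_option linter.unusedVariables false
set_option maxHeartbeats 1000000

section ChvatalAux

variable {V : Type*} [DecidableEq V]




def CyChain (R : V → V → Prop) (l : List V) : Prop := Cycle.Chain R (↑l : Cycle V)

lemma cyChain_rotate {R : V → V → Prop} {l : List V} (k : ℕ) :
    CyChain R (l.rotate k) ↔ CyChain R l := by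
  unfold CyChain
  have : ((l.rotate k : List V) : Cycle V) = (l : Cycle V) :=
    Quot.sound (List.IsRotated.forall l k)
  rw [this]

lemma cyChain_cons_iff {R : V → V → Prop} {a : V} {t : List V} :
    CyChain R (a :: t) ↔ List.Chain' R ((a :: t) ++ [a]) := by
  show Cycle.Chain R _ ↔ _
  rw [Cycle.chain_coe_cons]
  rfl

lemma cyChain_iff {R : V → V → Prop} {l : List V} (h : l ≠ []) :
    CyChain R l ↔ l.Chain' R ∧ R (l.getLast h) (l.head h) := by
  cases l with
  | nil => simp at h
  | cons a t =>
    rw [cyChain_cons_iff]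
    unfold List.Chain'
    rw [List.isChain_append]
    have hl : (a :: t).getLast? = some ((a :: t).getLast h) := List.getLast?_eq_getLast h
    simp [hl, List.head]

/-- A Hamiltonian cycle represented as a list of vertices. -/
def HamList (H : SimpleGraph V) (l : List V) : Prop :=
  l ≠ [] ∧ l.Nodup ∧ (∀ v, v ∈ l) ∧ CyChain H.Adj l

/-- Build a walk from a chain. -/
def walkOfChain (H : SimpleGraph V) :
    ∀ (a : V) (l : List V), List.Chain H.Adj a l →
      H.Walk a ((a :: l).getLast (List.cons_ne_nil a l))
  | _, [], _ => Walk.nil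
  | a, b :: l, h =>
    Walk.cons (List.chain_cons.mp h).1
      ((walkOfChain H b l (List.chain_cons.mp h).2).copy rfl
        (by rw [List.getLast_cons (List.cons_ne_nil b l)]))

lemma walkOfChain_support (H : SimpleGraph V) (a : V) (l : List V) (h : List.Chain H.Adj a l) :
    (walkOfChain H a l h).support = a :: l := by
  induction l generalizing a with
  | nil => rfl
  | cons b t ih =>
    show a :: _ = _
    rw [Walk.support_copy]; exact congrArg (a :: ·) (ih b _)

/-- Auxiliary: in a path of length ≥ 2 from a to b, the edge s(b,a) is not used. -/
lemma edge_not_mem_of_path {H : SimpleGraph V} {a b : V} (p : H.Walk a b)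
    (hp : p.IsPath) (hab : a ≠ b) (hlen : 2 ≤ p.length) : s(b, a) ∉ p.edges := by
  cases p with
  | nil => simp at hab
  | cons h q =>
    rename_i c
    simp only [Walk.edges_cons, List.mem_cons]
    rintro (he | he)
    · rw [Sym2.eq_iff] at he
      rcases he with ⟨h1, h2⟩ | ⟨h1, -⟩
      · exact hab h1.symm
      · subst h1
        -- q : H.Walk b b, a path, so q = nil, so length = 1
        have := hp.of_cons
        have hq : q.length = 0 := by
          by_contra h0
          have : q.support.Nodup := this.support_nodup
          cases q with
          | nil => exact h0 rfl
          | cons h' r =>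
            have : b ∈ r.support := r.end_mem_support
            simp only [Walk.support_cons, List.nodup_cons] at *
            exact this.1 ‹b ∈ r.support›
        simp [Walk.length_cons, hq] at hlen
    · have : a ∈ q.support := Walk.snd_mem_support_of_mem_edges q he
      have h2 := hp.support_nodup
      simp only [Walk.support_cons, List.nodup_cons] at h2
      exact h2.1 this

/-- A Hamiltonian list gives a Hamiltonian cycle. -/
lemma ham_of_hamList {H : SimpleGraph V} [Fintype V] (h3 : 3 ≤ Fintype.card V)
    {l : List V} (hl : HamList H l) : ∃ (a : V) (p : H.Walk a a), p.IsHamiltonianCycle := by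
  obtain ⟨hne, hnd, hmem, hcy⟩ := hl
  rw [cyChain_iff hne] at hcy
  obtain ⟨hch, hadj⟩ := hcy
  have hlen : l.length = Fintype.card V := by
    have : l.toFinset = Finset.univ := Finset.eq_univ_iff_forall.2 (by simp [hmem])
    rw [← List.toFinset_card_of_nodup hnd, this, Finset.card_univ]
  obtain ⟨a, t, rfl⟩ := List.exists_cons_of_ne_nil hne
  have hchain : List.Chain H.Adj a t := hch
  set p := walkOfChain H a t hchain with hp
  have hsupp : p.support = a :: t := walkOfChain_support H a t hchain
  have hpath : p.IsPath := Walk.IsPath.mk' (by rw [hsupp]; exact hnd)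
  have hhead : (a :: t).head hne = a := rfl
  rw [hhead] at hadj
  refine ⟨_, Walk.cons hadj p, ?_⟩
  rw [Walk.isHamiltonianCycle_iff_isCycle_and_support_count_tail_eq_one]
  constructor
  · rw [Walk.cons_isCycle_iff]
    refine ⟨hpath, ?_⟩
    apply edge_not_mem_of_path p hpath
    · intro hEq
      have hadj' : H.Adj ((a :: t).getLast (List.cons_ne_nil a t)) a := hadj
      rw [← hEq] at hadj'
      exact H.irrefl hadj'
    · have h1 : p.length + 1 = (a :: t).length := by
        rw [← Walk.length_support, hsupp]
      have h2 := hlen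
      simp only [List.length_cons] at h1 h2
      omega
  · intro x
    have : (Walk.cons hadj p).support.tail = a :: t := by
      simp [Walk.support_cons, hsupp]
    rw [this]
    exact List.count_eq_one_of_mem hnd (hmem x)

/-- A Hamiltonian cycle gives a Hamiltonian list. -/
lemma hamList_of_ham {H : SimpleGraph V} [Fintype V] (h3 : 3 ≤ Fintype.card V)
    {a : V} {p : H.Walk a a} (hp : p.IsHamiltonianCycle) : ∃ l, HamList H l := by
  refine ⟨p.support.tail, ?_, ?_, ?_, ?_⟩
  · have := hp.isHamiltonian_tail.mem_support a
    rw [Walk.support_tail_of_not_nil _ hp.isCycle.not_nil] at this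
    exact List.ne_nil_of_mem this
  · exact hp.isCycle.support_nodup
  · intro v
    have := hp.isHamiltonian_tail.mem_support v
    rwa [Walk.support_tail_of_not_nil _ hp.isCycle.not_nil] at this
  · have hne : p.support.tail ≠ [] := by
      have := hp.isHamiltonian_tail.mem_support a
      rw [Walk.support_tail_of_not_nil _ hp.isCycle.not_nil] at this
      exact List.ne_nil_of_mem this
    rw [cyChain_iff hne]
    constructor
    · exact (Walk.isChain_adj_support p).tail
    · have hgl : p.support.tail.getLast hne = a := by
        rw [List.getLast_tail]
        exact p.getLast_support
      have hhd : H.Adj a (p.support.tail.head hne) := by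
        have hc := Walk.isChain_adj_support p
        rw [p.support_eq_cons] at hc
        obtain ⟨b, t, ht⟩ := List.exists_cons_of_ne_nil hne
        have hh : p.support.tail.head hne = b := by
          have h1 : p.support.tail.head? = some b := by rw [ht]; rfl
          have h2 : p.support.tail.head? = some (p.support.tail.head hne) :=
            List.head?_eq_head hne
          rw [h1] at h2
          exact (Option.some_injective _ h2).symm
        rw [hh]
        rw [ht] at hc
        exact (List.isChain_cons_cons.mp hc).1
      rw [hgl]
      exact hhd





def PathList (H : SimpleGraph V) (x y : V) (l : List V) : Prop :=
  l.Nodup ∧ (∀ w, w ∈ l) ∧ l.Chain' H.Adj ∧ l.head? = some x ∧ l.getLast? = some y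

lemma getElem_idx_congr {l : List V} {i j : ℕ} (h : i = j) (hi : i < l.length) :
    l[i]'hi = l[j]'(h ▸ hi) := by subst h; rfl

lemma getElem_list_congr {l l' : List V} (h : l = l') {i : ℕ} (hi : i < l.length) :
    l[i]'hi = l'[i]'(h ▸ hi) := by subst h; rfl

lemma hamList_length {H : SimpleGraph V} [Fintype V] {l : List V} (hl : HamList H l) :
    l.length = Fintype.card V := by
  obtain ⟨-, hnd, hmem, -⟩ := hl
  have : l.toFinset = Finset.univ := Finset.eq_univ_iff_forall.2 (by simp [hmem])
  rw [← List.toFinset_card_of_nodup hnd, this, Finset.card_univ]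

lemma pathList_extract {H : SimpleGraph V} [Fintype V] (h3 : 3 ≤ Fintype.card V)
    {u v : V} (huv : u ≠ v) (hnadj : ¬ H.Adj u v)
    {l : List V} (hl : HamList (H ⊔ fromEdgeSet {s(u,v)}) l)
    (hnot : ∀ m, ¬ HamList H m) :
    (∃ m, PathList H u v m) ∨ (∃ m, PathList H v u m) := by
  have hlen := hamList_length hl
  obtain ⟨hne, hnd, hmem, hcy⟩ := hl
  have hlen3 : 3 ≤ l.length := hlen ▸ h3
  have hadj_iff : ∀ x y : V, (H ⊔ fromEdgeSet {s(u,v)}).Adj x y ↔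
      H.Adj x y ∨ ((x = u ∧ y = v) ∨ (x = v ∧ y = u)) := by
    intro x y
    simp only [sup_adj, fromEdgeSet_adj, Set.mem_singleton_iff, Sym2.eq_iff]
    constructor
    · rintro (h | ⟨(⟨rfl, rfl⟩ | ⟨rfl, rfl⟩), h2⟩)
      · exact Or.inl h
      · exact Or.inr (Or.inl ⟨rfl, rfl⟩)
      · exact Or.inr (Or.inr ⟨rfl, rfl⟩)
    · rintro (h | (⟨rfl, rfl⟩ | ⟨rfl, rfl⟩))
      · exact Or.inl h
      · exact Or.inr ⟨Or.inl ⟨rfl, rfl⟩, huv⟩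
      · exact Or.inr ⟨Or.inr ⟨rfl, rfl⟩, huv.symm⟩
  rw [cyChain_iff hne] at hcy
  obtain ⟨hch', hwrap⟩ := hcy
  obtain ⟨k, hk, x, y, hxy, hhd, hlst⟩ :
      ∃ (k : ℕ), k < l.length ∧ ∃ x y : V,
        ((x = u ∧ y = v) ∨ (x = v ∧ y = u)) ∧
        (l.rotate k).head? = some y ∧ (l.rotate k).getLast? = some x := by
    by_cases hch : l.Chain' H.Adj
    · have hnw : ¬ H.Adj (l.getLast hne) (l.head hne) := by
        intro hw
        exact hnot l ⟨hne, hnd, hmem, (cyChain_iff hne).2 ⟨hch, hw⟩⟩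
      rw [hadj_iff] at hwrap
      rcases hwrap with h | hxy
      · exact absurd h hnw
      refine ⟨0, by omega, l.getLast hne, l.head hne, hxy, ?_, ?_⟩
      · rw [List.rotate_zero]; exact List.head?_eq_head hne
      · rw [List.rotate_zero]; exact List.getLast?_eq_getLast hne
    · rw [List.Chain', List.isChain_iff_getElem] at hch
      push_neg at hch
      obtain ⟨i, hi, hbad⟩ := hch
      have hgood : (H ⊔ fromEdgeSet {s(u,v)}).Adj (l.get ⟨i, by omega⟩) (l.get ⟨i+1, by omega⟩) :=
        List.isChain_iff_getElem.1 hch' i hi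
      rw [hadj_iff] at hgood
      simp only [List.get_eq_getElem] at hgood hbad
      rcases hgood with h | hxy
      · exact absurd h hbad
      have hne' : l.rotate (i+1) ≠ [] := by
        intro h
        have h2 := List.length_rotate l (i+1)
        rw [h] at h2
        simp at h2
        omega
      refine ⟨i + 1, by omega, l[i]'(by omega), l[i+1]'(by omega), hxy, ?_, ?_⟩
      · rw [List.head?_eq_head hne', List.head_eq_getElem, List.getElem_rotate]
        rw [getElem_idx_congr (show (0 + (i+1)) % l.length = i + 1 by
          rw [Nat.zero_add, Nat.mod_eq_of_lt (by omega)])]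
      · rw [List.getLast?_eq_getLast hne', List.getLast_eq_getElem, List.getElem_rotate]
        rw [getElem_idx_congr (show ((l.rotate (i+1)).length - 1 + (i+1)) % l.length = i by
          rw [List.length_rotate]
          have h2 : l.length - 1 + (i+1) = l.length + i := by omega
          rw [h2, Nat.add_mod_left, Nat.mod_eq_of_lt (by omega)])]
  set m := l.rotate k with hm
  have hmlen : m.length = l.length := List.length_rotate l k
  have hmne : m ≠ [] := by
    intro h; rw [h] at hmlen; simp at hmlen; omega
  have hmnd : m.Nodup := List.nodup_rotate.2 hnd
  have hmmem : ∀ w, w ∈ m := fun w => List.mem_rotate.2 (hmem w)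
  have hmcy : CyChain (H ⊔ fromEdgeSet {s(u,v)}).Adj m := by
    rw [hm, cyChain_rotate]
    exact (cyChain_iff hne).2 ⟨hch', hwrap⟩
  rw [cyChain_iff hmne] at hmcy
  obtain ⟨hmch, -⟩ := hmcy
  have hhd0 : m[0]'(by omega) = y := by
    have := List.head?_eq_head hmne
    rw [hhd] at this
    rw [← List.head_eq_getElem hmne]
    exact (Option.some_injective _ this).symm
  have hlstN : m[m.length - 1]'(by omega) = x := by
    have := List.getLast?_eq_getLast hmne
    rw [hlst] at this
    rw [← List.getLast_eq_getElem hmne]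
    exact (Option.some_injective _ this.symm)
  have hinj : ∀ (j j' : ℕ) (hj : j < m.length) (hj' : j' < m.length),
      m[j]'hj = m[j']'hj' → j = j' := by
    intro j j' hj hj' he
    have := List.nodup_iff_injective_getElem.1 hmnd
      (a₁ := ⟨j, hj⟩) (a₂ := ⟨j', hj'⟩) he
    exact congrArg Fin.val this
  have hchH : m.Chain' H.Adj := by
    rw [List.Chain', List.isChain_iff_getElem]
    intro j hj
    have hadj := List.isChain_iff_getElem.1 hmch j hj
    rw [hadj_iff] at hadj
    rcases hadj with h | hp
    · exact h
    · exfalso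
      have hxyc : (m[j]'(by omega) = x ∧ m[j+1]'(by omega) = y) ∨
          (m[j]'(by omega) = y ∧ m[j+1]'(by omega) = x) := by
        rcases hp with ⟨h1, h2⟩ | ⟨h1, h2⟩ <;> rcases hxy with ⟨rfl, rfl⟩ | ⟨rfl, rfl⟩ <;> tauto
      rcases hxyc with ⟨h1, h2⟩ | ⟨h1, h2⟩
      · have := hinj j (m.length - 1) (by omega) (by omega) (by rw [h1, hlstN])
        omega
      · have h0 : j = 0 := hinj j 0 (by omega) (by omega) (by rw [h1, hhd0])
        have h1' : j + 1 = m.length - 1 := hinj (j+1) (m.length - 1) (by omega) (by omega)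
          (by rw [h2, hlstN])
        omega
  rcases hxy with ⟨rfl, rfl⟩ | ⟨rfl, rfl⟩
  · exact Or.inr ⟨m, hmnd, hmmem, hchH, hhd, hlst⟩
  · exact Or.inl ⟨m, hmnd, hmmem, hchH, hhd, hlst⟩






/-- The crossing construction: if a Hamiltonian path has a "crossing pair" of edges,
the graph has a Hamiltonian cycle. -/
lemma cross {H : SimpleGraph V} {x y : V} {l : List V}
    (hnd : l.Nodup) (hmem : ∀ w, w ∈ l) (hch : l.Chain' H.Adj)
    (hhd : l.head? = some x) (hlst : l.getLast? = some y)
    (hlen3 : 3 ≤ l.length) {i : ℕ} (hi : i < l.length - 1)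
    (hxi : H.Adj x (l[i+1]'(by omega))) (hiy : H.Adj (l[i]'(by omega)) y) :
    HamList H (l.take (i+1) ++ (l.drop (i+1)).reverse) := by
  have hne : l ≠ [] := by intro h; rw [h] at hlen3; simp at hlen3
  set A := l.take (i+1) with hA
  set B := l.drop (i+1) with hB
  have hAlen : A.length = i + 1 := by rw [hA, List.length_take]; omega
  have hBlen : B.length = l.length - (i+1) := by rw [hB, List.length_drop]
  have hAne : A ≠ [] := by intro h; rw [h] at hAlen; simp at hAlen
  have hBne : B ≠ [] := by intro h; rw [h] at hBlen; simp at hBlen; omega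
  have hperm : (A ++ B.reverse).Perm l := by
    calc (A ++ B.reverse).Perm (A ++ B) := List.Perm.append_left A B.reverse_perm
    _ = l := List.take_append_drop _ _
  have hx0 : l[0]'(by omega) = x := by
    have := List.head?_eq_head hne
    rw [hhd] at this
    rw [← List.head_eq_getElem hne]
    exact (Option.some_injective _ this).symm
  have hyN : l[l.length - 1]'(by omega) = y := by
    have := List.getLast?_eq_getLast hne
    rw [hlst] at this
    rw [← List.getLast_eq_getElem hne]
    exact (Option.some_injective _ this.symm)
  refine ⟨by simp [hAne], hperm.nodup_iff.2 hnd, fun w => hperm.mem_iff.2 (hmem w), ?_⟩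
  have hne2 : A ++ B.reverse ≠ [] := by simp [hAne]
  rw [cyChain_iff hne2]
  constructor
  · rw [List.Chain', List.isChain_append]
    refine ⟨hch.take _, ?_, ?_⟩
    · rw [List.isChain_reverse]
      exact (hch.drop _).imp (fun {a b} hab => hab.symm)
    · intro a ha b hb
      have hA' : A.getLast? = some (l[i]'(by omega)) := by
        rw [List.getLast?_eq_getLast hAne, List.getLast_eq_getElem]
        congr 1
        rw [getElem_idx_congr (show A.length - 1 = i by omega), getElem_list_congr hA]
        simp
      have hB' : B.reverse.head? = some y := by
        rw [List.head?_reverse, List.getLast?_eq_getLast hBne, List.getLast_eq_getElem]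
        congr 1
        rw [getElem_list_congr hB]
        simp only [List.getElem_drop]
        rw [getElem_idx_congr (show i + 1 + (B.length - 1) = l.length - 1 by omega)]
        exact hyN
      rw [hA'] at ha
      rw [hB'] at hb
      cases ha; cases hb
      exact hiy
  · -- wraparound: last is B.head = l[i+1], head is A.head = l[0] = x
    have hlast : (A ++ B.reverse).getLast hne2 = l[i+1]'(by omega) := by
      have h1 : (A ++ B.reverse).getLast? = B.reverse.getLast? := by
        rw [List.getLast?_append]
        rw [List.getLast?_reverse, List.head?_eq_head hBne]
        rfl
      rw [List.getLast?_reverse] at h1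
      have h2 : B.head? = some (l[i+1]'(by omega)) := by
        rw [List.head?_eq_head hBne, List.head_eq_getElem]
        congr 1
        rw [getElem_list_congr hB]
        simp
      rw [h2] at h1
      have := List.getLast?_eq_getLast hne2
      rw [h1] at this
      exact (Option.some_injective _ this.symm)
    have hhead : (A ++ B.reverse).head hne2 = x := by
      have h1 : (A ++ B.reverse).head? = A.head? := by
        rw [List.head?_append_of_ne_nil _ hAne]
      have h2 : A.head? = some x := by
        rw [List.head?_eq_head hAne, List.head_eq_getElem]
        congr 1
        rw [getElem_list_congr hA]
        simp only [List.getElem_take]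
        exact hx0
      rw [h2] at h1
      have := List.head?_eq_head hne2
      rw [h1] at this
      exact (Option.some_injective _ this).symm
    rw [hlast, hhead]
    exact hxi.symm






lemma getD_eq' {l : List V} {i : ℕ} (h : i < l.length) (d : V) : l.getD i d = l[i]'h := by
  simp [List.getD_eq_getElem?_getD, List.getElem?_eq_getElem h]


lemma deg_sum {H : SimpleGraph V} [Fintype V] [DecidableRel H.Adj]
    (h3 : 3 ≤ Fintype.card V) {x y : V} {l : List V}
    (hp : PathList H x y l) (hnot : ∀ m, ¬ HamList H m) :
    H.degree x + H.degree y + 1 ≤ Fintype.card V ∧ 1 ≤ H.degree x ∧ 1 ≤ H.degree y := by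
  obtain ⟨hnd, hmem, hch, hhd, hlst⟩ := hp
  have hlen : l.length = Fintype.card V := by
    have : l.toFinset = Finset.univ := Finset.eq_univ_iff_forall.2 (by simp [hmem])
    rw [← List.toFinset_card_of_nodup hnd, this, Finset.card_univ]
  have hlen3 : 3 ≤ l.length := hlen ▸ h3
  have hne : l ≠ [] := by intro h; rw [h] at hlen3; simp at hlen3
  have hx0 : l[0]'(by omega) = x := by
    have := List.head?_eq_head hne
    rw [hhd] at this
    rw [← List.head_eq_getElem hne]
    exact (Option.some_injective _ this).symm
  have hyN : l[l.length - 1]'(by omega) = y := by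
    have := List.getLast?_eq_getLast hne
    rw [hlst] at this
    rw [← List.getLast_eq_getElem hne]
    exact (Option.some_injective _ this.symm)
  have hinj : ∀ (j j' : ℕ) (hj : j < l.length) (hj' : j' < l.length),
      l[j]'hj = l[j']'hj' → j = j' := by
    intro j j' hj hj' he
    have := List.nodup_iff_injective_getElem.1 hnd
      (a₁ := ⟨j, hj⟩) (a₂ := ⟨j', hj'⟩) he
    exact congrArg Fin.val this
  set S := (Finset.range (l.length - 1)).filter (fun i => H.Adj x (l.getD (i+1) x)) with hS
  set T := (Finset.range (l.length - 1)).filter (fun i => H.Adj (l.getD i x) y) with hT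
  have hdisj : Disjoint S T := by
    rw [Finset.disjoint_left]
    intro i hiS hiT
    rw [hS, Finset.mem_filter, Finset.mem_range] at hiS
    rw [hT, Finset.mem_filter] at hiT
    obtain ⟨hir, hxa⟩ := hiS
    obtain ⟨-, hay⟩ := hiT
    rw [getD_eq' (show i + 1 < l.length by omega)] at hxa
    rw [getD_eq' (show i < l.length by omega)] at hay
    exact hnot _ (cross hnd hmem hch hhd hlst hlen3 hir hxa hay)
  have hScard : S.card = H.degree x := by
    rw [SimpleGraph.degree]
    apply Finset.card_bij (fun i _ => l.getD (i+1) x)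
    · intro i hi
      rw [hS, Finset.mem_filter] at hi
      exact (SimpleGraph.mem_neighborFinset _ _ _).2 hi.2
    · intro i hi j hj hij
      rw [hS, Finset.mem_filter, Finset.mem_range] at hi hj
      rw [getD_eq' (show i + 1 < l.length by omega),
        getD_eq' (show j + 1 < l.length by omega)] at hij
      have := hinj _ _ _ _ hij
      omega
    · intro w hw
      rw [SimpleGraph.mem_neighborFinset] at hw
      obtain ⟨j, hj, hjw⟩ := List.mem_iff_getElem.1 (hmem w)
      have hj0 : j ≠ 0 := by
        intro h
        subst h
        rw [hx0] at hjw
        exact H.irrefl (hjw ▸ hw)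
      refine ⟨j - 1, ?_, ?_⟩
      · rw [hS, Finset.mem_filter, Finset.mem_range]
        constructor
        · omega
        · rw [getD_eq' (show j - 1 + 1 < l.length by omega)]
          have : j - 1 + 1 = j := by omega
          simp_rw [this]
          rw [hjw]
          exact hw
      · rw [getD_eq' (show j - 1 + 1 < l.length by omega)]
        have : j - 1 + 1 = j := by omega
        simp_rw [this]
        exact hjw
  have hTcard : T.card = H.degree y := by
    rw [SimpleGraph.degree]
    apply Finset.card_bij (fun i _ => l.getD i x)
    · intro i hi
      rw [hT, Finset.mem_filter] at hi
      exact (SimpleGraph.mem_neighborFinset _ _ _).2 hi.2.symm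
    · intro i hi j hj hij
      rw [hT, Finset.mem_filter, Finset.mem_range] at hi hj
      rw [getD_eq' (show i < l.length by omega),
        getD_eq' (show j < l.length by omega)] at hij
      exact hinj _ _ _ _ hij
    · intro w hw
      rw [SimpleGraph.mem_neighborFinset] at hw
      obtain ⟨j, hj, hjw⟩ := List.mem_iff_getElem.1 (hmem w)
      have hjN : j ≠ l.length - 1 := by
        intro h
        subst h
        rw [hyN] at hjw
        exact H.irrefl (hjw ▸ hw.symm)
      refine ⟨j, ?_, ?_⟩
      · rw [hT, Finset.mem_filter, Finset.mem_range]
        refine ⟨by omega, ?_⟩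
        rw [getD_eq' hj, hjw]
        exact hw.symm
      · rw [getD_eq' hj]
        exact hjw
  have hdx : 1 ≤ H.degree x := by
    apply Finset.card_pos.2
    refine ⟨l[1]'(by omega), (SimpleGraph.mem_neighborFinset _ _ _).2 ?_⟩
    have := List.isChain_iff_getElem.1 hch 0 (by omega)
    rwa [← hx0]
  have hdy : 1 ≤ H.degree y := by
    apply Finset.card_pos.2
    refine ⟨l[l.length - 2]'(by omega), (SimpleGraph.mem_neighborFinset _ _ _).2 ?_⟩
    have := List.isChain_iff_getElem.1 hch (l.length - 2) (by omega)
    have he : l.length - 2 + 1 = l.length - 1 := by omega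
    rw [getElem_idx_congr he] at this
    rw [hyN] at this
    exact this.symm
  refine ⟨?_, hdx, hdy⟩
  have : (S ∪ T).card ≤ l.length - 1 := by
    calc (S ∪ T).card ≤ (Finset.range (l.length - 1)).card := by
          apply Finset.card_le_card
          intro i hi
          rw [Finset.mem_union] at hi
          rcases hi with h | h
          · rw [hS, Finset.mem_filter] at h; exact h.1
          · rw [hT, Finset.mem_filter] at h; exact h.1
    _ = l.length - 1 := Finset.card_range _
  rw [Finset.card_union_of_disjoint hdisj, hScard, hTcard] at this
  omega




lemma cyChain_iff' {R : V → V → Prop} {l : List V} (h : l ≠ []) :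
    CyChain R l ↔ l.Chain' R ∧ R (l.getLast h) (l.head h) := by
  cases l with
  | nil => simp at h
  | cons a t =>
    have : CyChain R (a :: t) ↔ List.Chain' R ((a :: t) ++ [a]) := by
      show Cycle.Chain R _ ↔ _
      rw [Cycle.chain_coe_cons]; rfl
    rw [this]
    unfold List.Chain'
    rw [List.isChain_append]
    have hl : (a :: t).getLast? = some ((a :: t).getLast h) := List.getLast?_eq_getLast h
    simp [hl, List.head]

/-- Counting lemma for sorted degree sequences. -/
lemma sorted_le {n : ℕ} {d : Fin n → ℕ} (hmono : Monotone d) {G : SimpleGraph V} [Fintype V]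
    [DecidableRel G.Adj] (hn : Fintype.card V = n) (σ : Fin n ≃ V)
    (hd : ∀ i, d i = G.degree (σ i))
    {j m : ℕ} (hj1 : 1 ≤ j) (hjn : j ≤ n)
    (hcard : j ≤ (Finset.univ.filter (fun v => G.degree v ≤ m)).card) :
    d ⟨j - 1, by omega⟩ ≤ m := by
  by_contra hlt
  push_neg at hlt
  have key : (Finset.univ.filter (fun v => G.degree v ≤ m)).card ≤ j - 1 := by
    have h1 : ∀ v ∈ Finset.univ.filter (fun v => G.degree v ≤ m),
        ((σ.symm v : Fin n) : ℕ) < j - 1 := by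
      intro v hv
      rw [Finset.mem_filter] at hv
      by_contra hge
      push_neg at hge
      have hle : d ⟨j - 1, by omega⟩ ≤ d (σ.symm v) := hmono (by exact hge)
      rw [hd (σ.symm v), Equiv.apply_symm_apply] at hle
      omega
    calc (Finset.univ.filter (fun v => G.degree v ≤ m)).card
        ≤ (Finset.range (j-1)).card := by
          apply Finset.card_le_card_of_injOn (fun v => ((σ.symm v : Fin n) : ℕ))
          · intro v hv
            rw [Finset.coe_range, Set.mem_Iio]
            exact h1 v hv
          · intro v _ w _ he
            have : σ.symm v = σ.symm w := Fin.ext he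
            exact σ.symm.injective this
    _ = j - 1 := Finset.card_range _
  omega

lemma hamList_of_complete [Fintype V] (h3 : 3 ≤ Fintype.card V) {H : SimpleGraph V}
    (hH : ∀ a b : V, a ≠ b → H.Adj a b) : ∃ l, HamList H l := by
  set l := Finset.univ.toList (α := V) with hl
  have hnd : l.Nodup := Finset.nodup_toList _
  have hmem : ∀ v : V, v ∈ l := by intro v; rw [hl, Finset.mem_toList]; exact Finset.mem_univ v
  have hlen : l.length = Fintype.card V := by
    rw [hl, Finset.length_toList, Finset.card_univ]
  have hne : l ≠ [] := by intro h; rw [h] at hlen; simp at hlen; omega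
  refine ⟨l, hne, hnd, hmem, ?_⟩
  rw [cyChain_iff' hne]
  constructor
  · apply List.Pairwise.isChain
    exact hnd.imp (fun hab => hH _ _ hab)
  · apply hH
    rw [List.getLast_eq_getElem, List.head_eq_getElem]
    intro he
    have := List.nodup_iff_injective_getElem.1 hnd
      (a₁ := ⟨l.length - 1, by omega⟩) (a₂ := ⟨0, by omega⟩) he
    have h0 := congrArg Fin.val this
    simp at h0
    omega

lemma degree_mono [Fintype V] {G H : SimpleGraph V} [DecidableRel G.Adj] [DecidableRel H.Adj]
    (h : G ≤ H) (v : V) : G.degree v ≤ H.degree v := by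
  apply Finset.card_le_card
  intro w hw
  rw [SimpleGraph.mem_neighborFinset] at *
  exact h hw


lemma final_count {H : SimpleGraph V} [Fintype V] [DecidableRel H.Adj] {n : ℕ}
    (hn : Fintype.card V = n)
    {s t : V} (hst : s ≠ t) (hnadj : ¬ H.Adj s t)
    (hdegs : H.degree s ≤ H.degree t)
    (hsum : H.degree s + H.degree t + 1 ≤ n)
    (h1 : 1 ≤ H.degree s)
    (hmax : ∀ w z : V, w ≠ z → ¬H.Adj w z →
      H.degree w + H.degree z ≤ H.degree s + H.degree t) :
    2 * H.degree s < n ∧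
    H.degree s ≤ (Finset.univ.filter (fun w => H.degree w ≤ H.degree s)).card ∧
    n - H.degree s ≤ (Finset.univ.filter (fun w => H.degree w ≤ n - H.degree s - 1)).card := by
  set k := H.degree s with hk
  have h2k : 2 * k < n := by omega
  -- generic estimate: the set of non-neighbors of z (other than z) is large
  have hnonnbr : ∀ z : V, n - 1 - H.degree z ≤
      (Finset.univ.filter (fun w => w ≠ z ∧ ¬ H.Adj z w)).card := by
    intro z
    set W := Finset.univ.filter (fun w => w ≠ z ∧ ¬ H.Adj z w) with hW
    have hcover : (Finset.univ : Finset V) ⊆ W ∪ ({z} ∪ H.neighborFinset z) := by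
      intro w _
      by_cases h1 : w = z
      · subst h1; simp
      · by_cases h2 : H.Adj z w
        · simp [SimpleGraph.mem_neighborFinset, h2]
        · simp [hW, h1, h2]
    have := Finset.card_le_card hcover
    rw [Finset.card_univ, hn] at this
    have h2 := Finset.card_union_le W ({z} ∪ H.neighborFinset z)
    have h3 := Finset.card_union_le ({z} : Finset V) (H.neighborFinset z)
    simp only [Finset.card_singleton] at h3
    rw [SimpleGraph.card_neighborFinset_eq_degree] at h3
    omega
  refine ⟨h2k, ?_, ?_⟩
  · -- claim 1
    have hsub : Finset.univ.filter (fun w => w ≠ t ∧ ¬ H.Adj t w) ⊆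
        Finset.univ.filter (fun w => H.degree w ≤ k) := by
      intro w hw
      simp only [Finset.mem_filter, Finset.mem_univ, true_and] at hw ⊢
      obtain ⟨hwt, hwa⟩ := hw
      have := hmax w t hwt (fun h => hwa h.symm)
      omega
    have h4 := hnonnbr t
    have h5 := Finset.card_le_card hsub
    omega
  · -- claim 2
    have hsub : insert s (Finset.univ.filter (fun w => w ≠ s ∧ ¬ H.Adj s w)) ⊆
        Finset.univ.filter (fun w => H.degree w ≤ n - k - 1) := by
      intro w hw
      rw [Finset.mem_insert] at hw
      simp only [Finset.mem_filter, Finset.mem_univ, true_and] at hw ⊢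
      rcases hw with rfl | ⟨hws, hwa⟩
      · omega
      · have := hmax w s hws (fun h => hwa h.symm)
        omega
    have h4 := hnonnbr s
    have h5 := Finset.card_le_card hsub
    rw [Finset.card_insert_of_notMem (by simp)] at h5
    omega

end ChvatalAux

theorem stmt8 {V : Type*} [Fintype V] [DecidableEq V] (G : SimpleGraph V)
    [DecidableRel G.Adj] (n : ℕ) (hn : Fintype.card V = n) (hn3 : 3 ≤ n)
    (d : Fin n → ℕ) (hmono : Monotone d)
    (σ : Fin n ≃ V) (hd : ∀ i, d i = G.degree (σ i))
    (hham : ¬ ∃ (a : V) (p : G.Walk a a), p.IsHamiltonianCycle) :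
    ∃ i : ℕ, ∃ h1 : 1 ≤ i, ∃ h2 : 2 * i < n,
      d ⟨i - 1, by omega⟩ ≤ i ∧ d ⟨n - i - 1, by omega⟩ ≤ n - i - 1 := by
  have h3 : 3 ≤ Fintype.card V := by omega
  have hnotG : ∀ l, ¬ HamList G l := fun l hl => hham (ham_of_hamList h3 hl)
  obtain ⟨H, ⟨hGH, hnotH⟩, hmaxH⟩ :=
    Set.Finite.exists_maximalFor id {K : SimpleGraph V | G ≤ K ∧ ∀ l, ¬ HamList K l}
      (Set.toFinite _) ⟨G, le_refl G, hnotG⟩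
  simp only [id] at hmaxH
  letI : DecidableRel H.Adj := Classical.decRel _
  have hpair : ∃ u v : V, u ≠ v ∧ ¬ H.Adj u v := by
    by_contra hc
    push_neg at hc
    obtain ⟨l, hl⟩ := hamList_of_complete h3 (fun p q hpq => hc p q hpq)
    exact hnotH l hl
  obtain ⟨u0, v0, hne0, hnadj0⟩ := hpair
  classical
  obtain ⟨⟨a, b⟩, habP, hmaxP⟩ := Finset.exists_max_image
    (Finset.univ.filter (fun p : V × V => p.1 ≠ p.2 ∧ ¬ H.Adj p.1 p.2))
    (fun p => H.degree p.1 + H.degree p.2)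
    ⟨(u0, v0), by simp [hne0, hnadj0]⟩
  simp only [Finset.mem_filter, Finset.mem_univ, true_and] at habP
  obtain ⟨hab, hnadjab⟩ := habP
  have hmax' : ∀ w z : V, w ≠ z → ¬H.Adj w z →
      H.degree w + H.degree z ≤ H.degree a + H.degree b := by
    intro w z h1 h2
    exact hmaxP (w, z) (by simp [h1, h2])
  have hHam' : ∃ l, HamList (H ⊔ fromEdgeSet {s(a,b)}) l := by
    by_contra hc
    push_neg at hc
    have hmem : (H ⊔ fromEdgeSet {s(a,b)}) ∈
        {K : SimpleGraph V | G ≤ K ∧ ∀ l, ¬ HamList K l} :=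
      ⟨le_trans hGH le_sup_left, hc⟩
    have heq := le_antisymm le_sup_left (hmaxH hmem le_sup_left)
    have hadj : (H ⊔ fromEdgeSet {s(a,b)}).Adj a b := by
      rw [SimpleGraph.sup_adj, SimpleGraph.fromEdgeSet_adj]
      exact Or.inr ⟨by simp, hab⟩
    rw [← heq] at hadj
    exact hnadjab hadj
  obtain ⟨l, hl⟩ := hHam'
  have hext := pathList_extract h3 hab hnadjab hl hnotH
  obtain ⟨x, y, m, hm, hsum_eq, hnxy, hxyne⟩ :
      ∃ x y m, PathList H x y m ∧
        H.degree x + H.degree y = H.degree a + H.degree b ∧ ¬ H.Adj x y ∧ x ≠ y := by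
    rcases hext with ⟨m, hm⟩ | ⟨m, hm⟩
    · exact ⟨a, b, m, hm, rfl, hnadjab, hab⟩
    · exact ⟨b, a, m, hm, by omega, fun h => hnadjab h.symm, hab.symm⟩
  obtain ⟨hsumxy, hdx, hdy⟩ := deg_sum h3 hm hnotH
  obtain ⟨s, t, hst, hnst, hdst, hsum_st, hds1⟩ :
      ∃ s t : V, s ≠ t ∧ ¬ H.Adj s t ∧ H.degree s ≤ H.degree t ∧
        H.degree s + H.degree t = H.degree a + H.degree b ∧ 1 ≤ H.degree s := by
    rcases le_total (H.degree x) (H.degree y) with h | h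
    · exact ⟨x, y, hxyne, hnxy, h, hsum_eq, hdx⟩
    · exact ⟨y, x, hxyne.symm, fun hh => hnxy hh.symm, h, by omega, hdy⟩
  have hmaxst : ∀ w z : V, w ≠ z → ¬H.Adj w z →
      H.degree w + H.degree z ≤ H.degree s + H.degree t := by
    intro w z h1 h2
    rw [hsum_st]
    exact hmax' w z h1 h2
  have hsum_n : H.degree s + H.degree t + 1 ≤ n := by
    rw [hn] at hsumxy
    omega
  obtain ⟨h2k, hc1, hc2⟩ := final_count hn hst hnst hdst hsum_n hds1 hmaxst
  refine ⟨H.degree s, hds1, h2k, ?_, ?_⟩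
  · apply sorted_le hmono hn σ hd hds1 (by omega)
    calc H.degree s ≤ (Finset.univ.filter (fun w => H.degree w ≤ H.degree s)).card := hc1
    _ ≤ (Finset.univ.filter (fun w => G.degree w ≤ H.degree s)).card := by
        apply Finset.card_le_card
        intro w hw
        simp only [Finset.mem_filter, Finset.mem_univ, true_and] at hw ⊢
        exact le_trans (degree_mono hGH w) hw
  · apply sorted_le hmono hn σ hd (show 1 ≤ n - H.degree s by omega) (by omega)
    calc n - H.degree s
        ≤ (Finset.univ.filter (fun w => H.degree w ≤ n - H.degree s - 1)).card := hc2
    _ ≤ (Finset.univ.filter (fun w => G.degree w ≤ n - H.degree s - 1)).card := by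
        apply Finset.card_le_card
        intro w hw
        simp only [Finset.mem_filter, Finset.mem_univ, true_and] at hw ⊢
        exact le_trans (degree_mono hGH w) hw
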